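/- arXiv:2503.01602 — 2 statements merged into one kernel-verified Lean document; each statement's English description precedes it below -/
import Mathlib

section
/- Pointwise identity for the rescaled gradient: let n ≥ 3, ε > 0, and u : Ω → ℂ^N be C¹ on an open Ω ⊆ ℝ^d. Then at each point, |∇(u/|u|_ε^{n/(n-1)})|²·|u|_ε² = |∇u|²/|u|_ε^{2/(n-1)} + |∇(|u|_ε^{(n-2)/(n-1)})|²·[ (n/(n-2))²·|u|²/|u|_ε² − 2n(n-1)/(n-2)² ]. -/
lemma frankloss_aux (x t V W p q C1 C2 e : ℝ) (hx : 0 < x)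
    (he1 : p + p + 1 = -e) (he2 : q + q - 2 = -e - 1)
    (hc1 : p ^ 2 = q ^ 2 * C1) (hc2 : p = -(q ^ 2) * C2) :
    ((p * x ^ (p - 1) * (2 * t)) ^ 2 * W
        + 2 * (p * x ^ (p - 1) * (2 * t)) * (x ^ p) * t + (x ^ p) ^ 2 * V) * x
      = V / x ^ e + (q * x ^ (q - 1) * (2 * t)) ^ 2 * (C1 * W / x - C2) := by
  have hmul : ∀ a b : ℝ, x ^ a * x ^ b = x ^ (a + b) := fun a b => (Real.rpow_add hx a b).symm
  have A2 : x ^ (p - 1) * x ^ (p - 1) * x = x ^ (-e - 2) := by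
    calc x ^ (p - 1) * x ^ (p - 1) * x = x ^ (p - 1 + (p - 1)) * x ^ (1 : ℝ) := by
          rw [hmul, Real.rpow_one]
      _ = x ^ (p - 1 + (p - 1) + 1) := hmul _ _
      _ = x ^ (-e - 2) := by rw [show p - 1 + (p - 1) + 1 = -e - 2 by linarith]
  have A1 : x ^ (p - 1) * x ^ p * x = x ^ (-e - 1) := by
    calc x ^ (p - 1) * x ^ p * x = x ^ (p - 1 + p) * x ^ (1 : ℝ) := by
          rw [hmul, Real.rpow_one]
      _ = x ^ (p - 1 + p + 1) := hmul _ _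
      _ = x ^ (-e - 1) := by rw [show p - 1 + p + 1 = -e - 1 by linarith]
  have A0 : x ^ p * x ^ p * x = x ^ (-e) := by
    calc x ^ p * x ^ p * x = x ^ (p + p) * x ^ (1 : ℝ) := by rw [hmul, Real.rpow_one]
      _ = x ^ (p + p + 1) := hmul _ _
      _ = x ^ (-e) := by rw [he1]
  have B : x ^ (q - 1) * x ^ (q - 1) = x ^ (-e - 1) := by
    rw [hmul, show q - 1 + (q - 1) = -e - 1 by linarith]
  have hB2 : x ^ (-e - 1) * x⁻¹ = x ^ (-e - 2) := by
    rw [← Real.rpow_neg_one x, hmul, show -e - 1 + -1 = -e - 2 by ring]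
  have hVe : V / x ^ e = V * x ^ (-e) := by
    rw [Real.rpow_neg hx.le, div_eq_mul_inv]
  have hxne : x ≠ 0 := hx.ne'
  calc ((p * x ^ (p - 1) * (2 * t)) ^ 2 * W
        + 2 * (p * x ^ (p - 1) * (2 * t)) * (x ^ p) * t + (x ^ p) ^ 2 * V) * x
      = (4 * p ^ 2 * t ^ 2 * W) * (x ^ (p - 1) * x ^ (p - 1) * x)
        + (4 * p * t ^ 2) * (x ^ (p - 1) * x ^ p * x) + V * (x ^ p * x ^ p * x) := by ring
    _ = (4 * p ^ 2 * t ^ 2 * W) * x ^ (-e - 2) + (4 * p * t ^ 2) * x ^ (-e - 1)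
        + V * x ^ (-e) := by rw [A2, A1, A0]
    _ = V * x ^ (-e) + (4 * q ^ 2 * t ^ 2) * (x ^ (-e - 1)) * (C1 * W * x⁻¹ - C2) := by
        rw [mul_sub, show (4 * q ^ 2 * t ^ 2) * (x ^ (-e - 1)) * (C1 * W * x⁻¹)
            = (4 * q ^ 2 * C1 * t ^ 2 * W) * (x ^ (-e - 1) * x⁻¹) by ring, hB2]
        linear_combination (4 * t ^ 2 * W * x ^ (-e - 2)) * hc1
          + (4 * t ^ 2 * x ^ (-e - 1)) * hc2
    _ = V / x ^ e + (q * x ^ (q - 1) * (2 * t)) ^ 2 * (C1 * W / x - C2) := by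
        rw [hVe, show (q * x ^ (q - 1) * (2 * t)) ^ 2
            = (4 * q ^ 2 * t ^ 2) * (x ^ (q - 1) * x ^ (q - 1)) by ring, B, div_eq_mul_inv]

lemma frankloss_norm_expand {N : ℕ} (a b : ℝ) (w z : EuclideanSpace ℂ (Fin N)) :
    ‖a • w + b • z‖ ^ 2
      = a ^ 2 * ‖w‖ ^ 2 + 2 * a * b * (inner ℝ z w : ℝ) + b ^ 2 * ‖z‖ ^ 2 := by
  rw [norm_add_sq_real, real_inner_smul_left, real_inner_smul_right, norm_smul, norm_smul,
    mul_pow, mul_pow, real_inner_comm]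
  simp only [Real.norm_eq_abs, sq_abs]
  ring

/-- Pointwise identity for the rescaled gradient (step (1) of the Frank–Loss integral
identity): for `u : Ω → ℂ^N` of class `C¹` on an open `Ω ⊆ ℝ^d`, `ε > 0`, `n ≥ 3`,
with `|u|_ε = √(|u|²+ε²)` and `|∇v|² = Σ_j |∂_j v|²`, at every point of `Ω`:
`|∇(u/|u|_ε^{n/(n-1)})|²·|u|_ε² = |∇u|²/|u|_ε^{2/(n-1)}
  + |∇(|u|_ε^{(n-2)/(n-1)})|²·[(n/(n-2))²·|u|²/|u|_ε² − 2n(n-1)/(n-2)²]`. -/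
theorem stmt8 {d N : ℕ} (n : ℕ) (hn : 3 ≤ n) (ε : ℝ) (hε : 0 < ε)
    (Ω : Set (EuclideanSpace ℝ (Fin d))) (hΩ : IsOpen Ω)
    (u : EuclideanSpace ℝ (Fin d) → EuclideanSpace ℂ (Fin N))
    (hu : ContDiffOn ℝ 1 u Ω) :
    ∀ x ∈ Ω,
      (∑ j : Fin d,
          ‖fderiv ℝ (fun y =>
              ((Real.sqrt (‖u y‖ ^ 2 + ε ^ 2)) ^ (-(n : ℝ) / ((n : ℝ) - 1))) • u y) x
            (EuclideanSpace.single j (1:ℝ))‖ ^ 2) *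
          (Real.sqrt (‖u x‖ ^ 2 + ε ^ 2)) ^ 2 =
        (∑ j : Fin d, ‖fderiv ℝ u x (EuclideanSpace.single j (1:ℝ))‖ ^ 2) /
            (Real.sqrt (‖u x‖ ^ 2 + ε ^ 2)) ^ ((2 : ℝ) / ((n : ℝ) - 1)) +
          (∑ j : Fin d,
              (fderiv ℝ (fun y =>
                  (Real.sqrt (‖u y‖ ^ 2 + ε ^ 2)) ^ (((n : ℝ) - 2) / ((n : ℝ) - 1))) x
                (EuclideanSpace.single j (1:ℝ))) ^ 2) *
            (((n : ℝ) / ((n : ℝ) - 2)) ^ 2 * ‖u x‖ ^ 2 /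
                (Real.sqrt (‖u x‖ ^ 2 + ε ^ 2)) ^ 2 -
              2 * (n : ℝ) * ((n : ℝ) - 1) / ((n : ℝ) - 2) ^ 2) := by
  intro x hx
  have h3 : (3:ℝ) ≤ (n:ℝ) := by exact_mod_cast hn
  have hn1 : (n:ℝ) - 1 ≠ 0 := by linarith
  have hn2 : (n:ℝ) - 2 ≠ 0 := by linarith
  have hux : DifferentiableAt ℝ u x :=
    (hu.contDiffAt (hΩ.mem_nhds hx)).differentiableAt one_ne_zero
  have hD : HasFDerivAt u (fderiv ℝ u x) x := hux.hasFDerivAt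
  set D := fderiv ℝ u x with hDdef
  set G : EuclideanSpace ℝ (Fin d) →L[ℝ] ℝ := 2 • (innerSL ℝ (u x)).comp D with hGdef
  have hg : HasFDerivAt (fun y => ‖u y‖ ^ 2 + ε ^ 2) G x := hD.norm_sq.add_const (ε ^ 2)
  have hgx : (0:ℝ) < ‖u x‖ ^ 2 + ε ^ 2 := by positivity
  set p : ℝ := -(n:ℝ) / ((n:ℝ) - 1) / 2 with hpdef
  set q : ℝ := ((n:ℝ) - 2) / ((n:ℝ) - 1) / 2 with hqdef
  have f1eq : (fun y => (Real.sqrt (‖u y‖ ^ 2 + ε ^ 2)) ^ (-(n : ℝ) / ((n : ℝ) - 1)) • u y)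
      = fun y => ((‖u y‖ ^ 2 + ε ^ 2) ^ p) • u y := by
    funext y
    rw [hpdef, Real.rpow_div_two_eq_sqrt _ (by positivity)]
  have f2eq : (fun y => (Real.sqrt (‖u y‖ ^ 2 + ε ^ 2)) ^ (((n : ℝ) - 2) / ((n : ℝ) - 1)))
      = fun y => (‖u y‖ ^ 2 + ε ^ 2) ^ q := by
    funext y
    rw [hqdef, Real.rpow_div_two_eq_sqrt _ (by positivity)]
  have h1 : HasFDerivAt (fun y => (‖u y‖ ^ 2 + ε ^ 2) ^ p)
      ((p * (‖u x‖ ^ 2 + ε ^ 2) ^ (p - 1)) • G) x := hg.rpow_const (Or.inl hgx.ne')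
  have h1q : HasFDerivAt (fun y => (‖u y‖ ^ 2 + ε ^ 2) ^ q)
      ((q * (‖u x‖ ^ 2 + ε ^ 2) ^ (q - 1)) • G) x := hg.rpow_const (Or.inl hgx.ne')
  have h2 : HasFDerivAt (fun y => ((‖u y‖ ^ 2 + ε ^ 2) ^ p) • u y)
      (((‖u x‖ ^ 2 + ε ^ 2) ^ p) • D
        + ((p * (‖u x‖ ^ 2 + ε ^ 2) ^ (p - 1)) • G).smulRight (u x)) x := h1.smul hD
  rw [f1eq, f2eq, h2.fderiv, h1q.fderiv]
  rw [← Real.rpow_div_two_eq_sqrt ((2:ℝ)/((n:ℝ)-1)) hgx.le]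
  simp only [Real.sq_sqrt hgx.le]
  rw [Finset.sum_mul, Finset.sum_div, Finset.sum_mul, ← Finset.sum_add_distrib]
  refine Finset.sum_congr rfl fun j _ => ?_
  simp only [ContinuousLinearMap.add_apply, ContinuousLinearMap.coe_smul', Pi.smul_apply,
    ContinuousLinearMap.smulRight_apply, ContinuousLinearMap.smul_apply,
    ContinuousLinearMap.comp_apply, innerSL_apply_apply, smul_eq_mul, hGdef]
  rw [frankloss_norm_expand]
  have he1 : p + p + 1 = -((2:ℝ)/((n:ℝ)-1)/2) := by rw [hpdef]; field_simp; ring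
  have he2 : q + q - 2 = -((2:ℝ)/((n:ℝ)-1)/2) - 1 := by rw [hqdef]; field_simp; ring
  have hc1 : p ^ 2 = q ^ 2 * ((n:ℝ)/((n:ℝ)-2)) ^ 2 := by rw [hpdef, hqdef]; field_simp
  have hc2 : p = -(q ^ 2) * (2 * (n:ℝ) * ((n:ℝ)-1) / ((n:ℝ)-2) ^ 2) := by
    rw [hpdef, hqdef]; field_simp
  have key := frankloss_aux (‖u x‖ ^ 2 + ε ^ 2)
    (inner ℝ (u x) (D (EuclideanSpace.single j (1:ℝ))) : ℝ)
    (‖D (EuclideanSpace.single j (1:ℝ))‖ ^ 2) (‖u x‖ ^ 2) p q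
    (((n:ℝ)/((n:ℝ)-2)) ^ 2) (2 * (n:ℝ) * ((n:ℝ)-1) / ((n:ℝ)-2) ^ 2)
    ((2:ℝ)/((n:ℝ)-1)/2) hgx he1 he2 hc1 hc2
  linear_combination key
end

section
/- On ℝ^n with n odd, the vector field A(x) = n·(1+|x|²)^{-2}·((1−|x|²)e₁ + 2⟨x,e₁⟩x + 2L_S x) satisfies |A(x)| = n/(1+|x|²) for every x ∈ ℝ^n, and consequently ∫_{ℝ^n} |A|^n dx = n^n ∫_{ℝ^n} (1+|x|²)^{-n} dx. -/
open MeasureTheory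
open scoped RealInnerProductSpace

/-- The skew-symmetric matrix `L_S`: zero in the first row and column, with 2×2 blocks
`[[0,-1],[1,0]]` along the diagonal in the remaining coordinates. -/
def LS (n : ℕ) : Matrix (Fin n) (Fin n) ℝ := fun i j =>
  if i.val = j.val + 1 ∧ j.val % 2 = 1 then 1
  else if j.val = i.val + 1 ∧ i.val % 2 = 1 then -1 else 0

/-- The pairing 2k-1 ↔ 2k, fixing 0. -/
def sfun (n : ℕ) (hn : n % 2 = 1) (i : Fin n) : Fin n :=
  if h : i.val % 2 = 1 then ⟨i.val + 1, by omega⟩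
  else ⟨i.val - 1, by omega⟩

lemma sfun_val (n : ℕ) (hn : n % 2 = 1) (i : Fin n) :
    (sfun n hn i).val = if i.val % 2 = 1 then i.val + 1 else i.val - 1 := by
  unfold sfun
  by_cases h : i.val % 2 = 1 <;> simp [h]

lemma sfun_invol (n : ℕ) (hn : n % 2 = 1) : Function.Involutive (sfun n hn) := by
  intro i
  apply Fin.ext
  rw [sfun_val, sfun_val]
  split_ifs <;> omega

lemma sfun_zero_iff (n : ℕ) (hn : n % 2 = 1) (i : Fin n) :
    (sfun n hn i).val = 0 ↔ i.val = 0 := by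
  rw [sfun_val]
  by_cases h : i.val % 2 = 1 <;> simp [h] <;> omega

/-- Row formula for L_S x. -/
lemma row_eq (n : ℕ) (hn : n % 2 = 1) (x : Fin n → ℝ) (i : Fin n) :
    ∑ j, LS n i j * x j =
      if i.val = 0 then 0
      else if i.val % 2 = 1 then -x (sfun n hn i) else x (sfun n hn i) := by
  by_cases h0 : i.val = 0
  · rw [if_pos h0]
    apply Finset.sum_eq_zero
    intro j _
    have : LS n i j = 0 := by
      unfold LS
      rw [if_neg (by omega), if_neg (by omega)]
    simp [this]
  · by_cases h1 : i.val % 2 = 1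
    · rw [if_neg h0, if_pos h1]
      have hlt : i.val + 1 < n := by omega
      rw [Finset.sum_eq_single (⟨i.val + 1, hlt⟩ : Fin n)]
      · have hL : LS n i ⟨i.val + 1, hlt⟩ = -1 := by
          unfold LS
          simp only [Fin.val_mk]
          rw [if_neg (by omega), if_pos (by simp [h1])]
        have hv : x (sfun n hn i) = x ⟨i.val + 1, hlt⟩ := by
          congr 1; apply Fin.ext; rw [sfun_val]; simp [h1]
        rw [hL, hv]; ring
      · intro j _ hj
        have hjv : j.val ≠ i.val + 1 := fun hc => hj (Fin.ext hc)
        have : LS n i j = 0 := by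
          unfold LS
          rw [if_neg (by omega), if_neg (by exact fun hc => hjv hc.1)]
        simp [this]
      · intro h; exact absurd (Finset.mem_univ _) h
    · rw [if_neg h0, if_neg h1]
      have hlt : i.val - 1 < n := by omega
      rw [Finset.sum_eq_single (⟨i.val - 1, hlt⟩ : Fin n)]
      · have hL : LS n i ⟨i.val - 1, hlt⟩ = 1 := by
          unfold LS
          simp only [Fin.val_mk]
          rw [if_pos (by omega : i.val = (i.val - 1) + 1 ∧ (i.val - 1) % 2 = 1)]
        have hv : x (sfun n hn i) = x ⟨i.val - 1, hlt⟩ := by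
          congr 1; apply Fin.ext; rw [sfun_val]; simp [h1]
        rw [hL, hv]; ring
      · intro j _ hj
        have hjv : j.val ≠ i.val - 1 := fun hc => hj (Fin.ext hc)
        have : LS n i j = 0 := by
          unfold LS
          rw [if_neg (by omega), if_neg (by omega)]
        simp [this]
      · intro h; exact absurd (Finset.mem_univ _) h

lemma sum_mul_row (n : ℕ) (hn : n % 2 = 1) (x : Fin n → ℝ) :
    ∑ i, x i * (∑ j, LS n i j * x j) = 0 := by
  have hσσ := sfun_invol n hn
  set f : Fin n → ℝ := fun i => x i * (∑ j, LS n i j * x j) with hf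
  have hneg : ∀ i, f (sfun n hn i) = - f i := by
    intro i
    simp only [hf]
    rw [row_eq n hn x (sfun n hn i), row_eq n hn x i]
    by_cases h0 : i.val = 0
    · rw [if_pos ((sfun_zero_iff n hn i).mpr h0), if_pos h0]; ring
    · have h0' : ¬ (sfun n hn i).val = 0 := by rw [sfun_zero_iff]; exact h0
      rw [if_neg h0', if_neg h0]
      have hσi : sfun n hn (sfun n hn i) = i := hσσ i
      by_cases h1 : i.val % 2 = 1
      · have h1' : ¬ (sfun n hn i).val % 2 = 1 := by rw [sfun_val]; simp [h1]; omega
        rw [if_neg h1', if_pos h1, hσi]; ring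
      · have h1' : (sfun n hn i).val % 2 = 1 := by rw [sfun_val]; simp [h1]; omega
        rw [if_pos h1', if_neg h1, hσi]; ring
  have hre : ∑ i, f (sfun n hn i) = ∑ i, f i :=
    Fintype.sum_bijective _ hσσ.bijective _ _ (fun i => rfl)
  have h2 : ∑ i, f (sfun n hn i) = ∑ i, -(f i) :=
    Finset.sum_congr rfl (fun i _ => hneg i)
  have h3 : ∑ i, -(f i) = - ∑ i, f i := by simp
  linarith

lemma sum_row_sq (n : ℕ) (hn : n % 2 = 1) (hpos : 0 < n) (x : Fin n → ℝ) :
    ∑ i, (∑ j, LS n i j * x j) ^ 2 = ∑ i, x i ^ 2 - x ⟨0, hpos⟩ ^ 2 := by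
  have hσσ := sfun_invol n hn
  have step1 : ∀ i, (∑ j, LS n i j * x j) ^ 2 =
      (fun k => if k.val = 0 then 0 else x k ^ 2) (sfun n hn i) := by
    intro i
    rw [row_eq n hn x i]
    by_cases h0 : i.val = 0
    · simp [h0, (sfun_zero_iff n hn i).mpr h0]
    · have h0' : ¬ (sfun n hn i).val = 0 := by rw [sfun_zero_iff]; exact h0
      simp only [h0', h0, if_neg, if_false]
      by_cases h1 : i.val % 2 = 1 <;> simp [h1]
  have hpt : ∀ k : Fin n, (if k.val = 0 then 0 else x k ^ 2)
      = x k ^ 2 - (if k = ⟨0, hpos⟩ then x k ^ 2 else 0) := by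
    intro k
    by_cases h : k = ⟨0, hpos⟩
    · subst h; simp
    · have hv : ¬ k.val = 0 := fun hc => h (Fin.ext hc)
      simp [h, hv]
  calc ∑ i, (∑ j, LS n i j * x j) ^ 2
      = ∑ i, (fun k => if k.val = 0 then 0 else x k ^ 2) (sfun n hn i) :=
        Finset.sum_congr rfl (fun i _ => step1 i)
    _ = ∑ k, (if k.val = 0 then 0 else x k ^ 2) :=
        Fintype.sum_bijective _ hσσ.bijective _ _ (fun i => rfl)
    _ = ∑ i, x i ^ 2 - x ⟨0, hpos⟩ ^ 2 := by
        rw [Finset.sum_congr rfl (fun k _ => hpt k), Finset.sum_sub_distrib,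
          Finset.sum_ite_eq' Finset.univ (⟨0, hpos⟩ : Fin n) (fun k => x k ^ 2)]
        simp

/-- The magnetic potential `A(x) = n·(1+|x|²)⁻²·((1-|x|²)e₁ + 2⟨x,e₁⟩x + 2L_S x)`. -/
noncomputable def Avec (n : ℕ) (hn : 0 < n) (x : EuclideanSpace ℝ (Fin n)) :
    EuclideanSpace ℝ (Fin n) :=
  ((n : ℝ) * ((1 + ‖x‖ ^ 2)⁻¹) ^ 2) •
    ((1 - ‖x‖ ^ 2) • (EuclideanSpace.single (⟨0, hn⟩ : Fin n) (1 : ℝ)) +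
      (2 * x ⟨0, hn⟩) • x +
      (2 : ℝ) • (show EuclideanSpace ℝ (Fin n) from WithLp.toLp 2 (fun i => ∑ j, LS n i j * x j)))

/-- On `ℝⁿ` with `n` odd, the Frank–Loss field `A` satisfies `|A(x)| = n/(1+|x|²)`
for every `x`, and consequently `∫ |A|ⁿ dx = nⁿ·∫ (1+|x|²)⁻ⁿ dx`. -/
theorem stmt11 (n : ℕ) (hn : 3 ≤ n) (hodd : Odd n) (hn0 : 0 < n) :
    (∀ x : EuclideanSpace ℝ (Fin n), ‖Avec n hn0 x‖ = (n : ℝ) / (1 + ‖x‖ ^ 2)) ∧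
    ∫ x : EuclideanSpace ℝ (Fin n), ‖Avec n hn0 x‖ ^ n =
      (n : ℝ) ^ n * ∫ x : EuclideanSpace ℝ (Fin n), ((1 + ‖x‖ ^ 2) ^ n)⁻¹ := by
  have hmod : n % 2 = 1 := Nat.odd_iff.mp hodd
  have key : ∀ x : EuclideanSpace ℝ (Fin n), ‖Avec n hn0 x‖ = (n : ℝ) / (1 + ‖x‖ ^ 2) := by
    intro x
    set p0 : Fin n := ⟨0, hn0⟩ with hp0
    set e : EuclideanSpace ℝ (Fin n) := EuclideanSpace.single p0 (1 : ℝ) with he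
    set y : EuclideanSpace ℝ (Fin n) :=
      (show EuclideanSpace ℝ (Fin n) from WithLp.toLp 2 (fun i => ∑ j, LS n i j * x j)) with hy
    set r : ℝ := ‖x‖ ^ 2 with hr
    have hr0 : 0 < 1 + r := by positivity
    -- inner product facts
    have hinner : ∀ u v : EuclideanSpace ℝ (Fin n), ⟪u, v⟫ = ∑ i, u i * v i := by
      intro u v
      simp [PiLp.inner_apply, RCLike.inner_apply]
      exact Finset.sum_congr rfl (fun i _ => mul_comm _ _)
    have hxx : ⟪x, x⟫ = ∑ i, x i ^ 2 := by
      rw [hinner]; apply Finset.sum_congr rfl; intro i _; ring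
    have hrs : r = ∑ i, x i ^ 2 := by
      rw [hr, ← hxx, real_inner_self_eq_norm_sq]
    have hee : ⟪e, e⟫ = 1 := by
      rw [he, real_inner_self_eq_norm_sq, EuclideanSpace.norm_single]; norm_num
    have hy_apply : ∀ i, y i = ∑ j, LS n i j * x j := fun i => rfl
    have hex : ⟪e, x⟫ = x p0 := by
      rw [he, EuclideanSpace.inner_single_left]; simp
    have hey : ⟪e, y⟫ = 0 := by
      rw [he, EuclideanSpace.inner_single_left]
      simp only [map_one, one_mul]
      rw [hy_apply, row_eq n hmod x p0, if_pos rfl]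
    have hxy : ⟪x, y⟫ = 0 := by
      rw [hinner]
      simpa using sum_mul_row n hmod x
    have hyy : ⟪y, y⟫ = r - x p0 ^ 2 := by
      rw [hinner]
      have : ∀ i : Fin n, y i * y i = (∑ j, LS n i j * x j) ^ 2 := by
        intro i; rw [hy_apply]; ring
      rw [Finset.sum_congr rfl (fun i _ => this i), sum_row_sq n hmod hn0 x, hrs]
    -- the unscaled vector
    set v : EuclideanSpace ℝ (Fin n) := (1 - r) • e + (2 * x p0) • x + (2 : ℝ) • y with hv
    have hv2 : ‖v‖ ^ 2 = (1 + r) ^ 2 := by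
      rw [← real_inner_self_eq_norm_sq, hv]
      simp only [inner_add_left, inner_add_right, real_inner_smul_left, real_inner_smul_right]
      have hxe : ⟪x, e⟫ = x p0 := by rw [real_inner_comm]; exact hex
      have hye : ⟪y, e⟫ = 0 := by rw [real_inner_comm]; exact hey
      have hyx : ⟪y, x⟫ = 0 := by rw [real_inner_comm]; exact hxy
      rw [hee, hex, hey, hxy, hyy, hxe, hye, hyx, real_inner_self_eq_norm_sq, ← hr]
      ring
    have hvnorm : ‖v‖ = 1 + r := by
      have h1 : ‖v‖ = Real.sqrt (‖v‖ ^ 2) := (Real.sqrt_sq (norm_nonneg v)).symm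
      rw [h1, hv2, Real.sqrt_sq hr0.le]
    have hA : Avec n hn0 x = ((n : ℝ) * ((1 + r)⁻¹) ^ 2) • v := by
      rw [Avec, hv, hr, he, hy, hp0]
    rw [hA, norm_smul, hvnorm]
    have hc : 0 ≤ (n : ℝ) * ((1 + r)⁻¹) ^ 2 := by positivity
    rw [Real.norm_eq_abs, abs_of_nonneg hc]
    field_simp
  refine ⟨key, ?_⟩
  have hpt : ∀ x : EuclideanSpace ℝ (Fin n),
      ‖Avec n hn0 x‖ ^ n = (n : ℝ) ^ n * ((1 + ‖x‖ ^ 2) ^ n)⁻¹ := by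
    intro x
    rw [key x, div_pow, div_eq_mul_inv]
  simp_rw [hpt]
  rw [integral_const_mul]
end
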